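/- Let A ∈ B(H,K) be a nonzero compact operator and X ∈ B(H,K). Then the family of nonempty sets { unit vectors φ in the range of E_{A*A}[‖A‖²−δ, ‖A‖²] } is nested decreasing as δ decreases, and inf_{δ>0} sup over this set of Re⟨Xφ, Aφ⟩ equals the maximum of Re⟨Xφ, Aφ⟩ over unit vectors φ with A*Aφ = ‖A‖²φ. -/

import Mathlib

set_option linter.unusedSectionVars false

open ContinuousLinearMap Filter Set

/-- The range of the spectral projection `E_T S` of a (selfadjoint) operator `T`
for a closed set `S ⊆ ℝ`. -/
noncomputable def spectralSubspace {H : Type*} [NormedAddCommGroup H]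
    [InnerProductSpace ℂ H] [CompleteSpace H] (T : H →L[ℂ] H) (S : Set ℝ) : Set H :=
  {φ | ∀ f : ℝ → ℝ, Continuous f → (∀ x ∈ S, f x = 0) → cfc f T φ = 0}

namespace InfSupAux

variable {H K : Type*} [NormedAddCommGroup H] [InnerProductSpace ℂ H] [CompleteSpace H]
  [NormedAddCommGroup K] [InnerProductSpace ℂ K] [CompleteSpace K]

local notation "⟪" x ", " y "⟫" => @inner ℂ _ _ x y

lemma real_smul_eq (r : ℝ) (x : H) : (r : ℂ) • x = r • x := by
  rw [← algebraMap_smul ℂ r x, Complex.coe_algebraMap]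

lemma inner_real_smul_right (x y : H) (r : ℝ) : ⟪x, r • y⟫ = r • ⟪x, y⟫ := by
  rw [← algebraMap_smul ℂ r y, inner_smul_right, ← Algebra.smul_def]

lemma T_selfAdjoint (A : H →L[ℂ] K) : IsSelfAdjoint (adjoint A ∘L A) := by
  rw [isSelfAdjoint_iff', adjoint_comp, adjoint_adjoint]

lemma T_inner (A : H →L[ℂ] K) (φ : H) :
    ⟪φ, (adjoint A ∘L A) φ⟫ = ((‖A φ‖ ^ 2 : ℝ) : ℂ) := by
  rw [coe_comp', Function.comp_apply, adjoint_inner_right, inner_self_eq_norm_sq_to_K]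
  norm_cast

lemma T_re (A : H →L[ℂ] K) (φ : H) :
    (⟪φ, (adjoint A ∘L A) φ⟫).re = ‖A φ‖ ^ 2 := by
  rw [T_inner]; exact Complex.ofReal_re _

lemma re_smul_inner (r : ℝ) (x : H) : (⟪x, r • x⟫).re = r * ‖x‖ ^ 2 := by
  rw [← RCLike.re_to_complex, inner_real_smul_right, RCLike.smul_re, inner_self_eq_norm_sq]

lemma T_apply_norm_le (A : H →L[ℂ] K) (φ : H) :
    ‖(adjoint A ∘L A) φ‖ ≤ ‖A‖ ^ 2 * ‖φ‖ := by
  calc ‖(adjoint A ∘L A) φ‖ ≤ ‖adjoint A ∘L A‖ * ‖φ‖ := le_opNorm _ _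
    _ = ‖A‖ ^ 2 * ‖φ‖ := by rw [norm_adjoint_comp_self, sq]

lemma norm_T_sub_sq (A : H →L[ℂ] K) (a : ℝ) (φ : H) :
    ‖(adjoint A ∘L A) φ - a • φ‖ ^ 2
      = ‖(adjoint A ∘L A) φ‖ ^ 2 - 2 * a * ‖A φ‖ ^ 2 + a ^ 2 * ‖φ‖ ^ 2 := by
  rw [norm_sub_sq (𝕜 := ℂ), inner_real_smul_right, RCLike.smul_re, norm_smul]
  have h1 : RCLike.re ⟪(adjoint A ∘L A) φ, φ⟫ = ‖A φ‖ ^ 2 := by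
    rw [← inner_conj_symm, RCLike.conj_re, RCLike.re_to_complex, T_re]
  rw [h1, Real.norm_eq_abs, mul_pow, sq_abs]
  ring

/-- The key compactness lemma: a sequence of approximate unit eigenvectors has a
subsequence converging to a genuine unit eigenvector. -/
lemma exists_eigen_of_approx (A : H →L[ℂ] K) (hcpt : IsCompactOperator A)
    {a : ℝ} (ha : 0 < a) (u : ℕ → H) (hu : ∀ n, ‖u n‖ = 1)
    (hTu : Tendsto (fun n => ‖(adjoint A ∘L A) (u n) - a • (u n)‖) atTop (nhds 0)) :
    ∃ p ∈ closure (Set.range u), ‖p‖ = 1 ∧ (adjoint A ∘L A) p = a • p := by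
  obtain ⟨C, hC, hsub⟩ := hcpt.image_closedBall_subset_compact (f := A.toLinearMap) 1
  have hmem : ∀ n, A (u n) ∈ C := fun n =>
    hsub ⟨u n, by simp [Metric.mem_closedBall, dist_eq_norm, hu n], rfl⟩
  obtain ⟨y, hyC, φm, hφm, hconv⟩ := hC.tendsto_subseq hmem
  -- T (u (φm k)) → adjoint A y
  have hTconv : Tendsto (fun k => (adjoint A ∘L A) (u (φm k))) atTop (nhds (adjoint A y)) :=
    ((adjoint A).continuous.tendsto y).comp hconv
  have hTu' : Tendsto (fun k => (adjoint A ∘L A) (u (φm k)) - a • u (φm k)) atTop (nhds 0) := by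
    have h0 := hTu.comp hφm.tendsto_atTop
    exact tendsto_zero_iff_norm_tendsto_zero.mpr h0
  have hau : Tendsto (fun k => a • u (φm k)) atTop (nhds (adjoint A y)) := by
    have := hTconv.sub hTu'
    simpa using this
  set p : H := a⁻¹ • adjoint A y with hp
  have huconv : Tendsto (fun k => u (φm k)) atTop (nhds p) := by
    have := hau.const_smul (a⁻¹)
    simpa [smul_smul, inv_mul_cancel₀ ha.ne'] using this
  refine ⟨p, ?_, ?_, ?_⟩
  · exact mem_closure_of_tendsto huconv (Eventually.of_forall fun k => mem_range_self _)
  · have h1 : Tendsto (fun k => ‖u (φm k)‖) atTop (nhds 1) := by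
      simpa [hu] using tendsto_const_nhds (x := (1:ℝ)) (f := atTop (α := ℕ))
    have h2 : Tendsto (fun k => ‖u (φm k)‖) atTop (nhds ‖p‖) :=
      (continuous_norm.tendsto p).comp huconv
    exact tendsto_nhds_unique h2 h1
  · have h1 : Tendsto (fun k => (adjoint A ∘L A) (u (φm k))) atTop
        (nhds ((adjoint A ∘L A) p)) := ((adjoint A ∘L A).continuous.tendsto p).comp huconv
    have h2 : Tendsto (fun k => a • u (φm k)) atTop (nhds (a • p)) := huconv.const_smul a
    have h3 := tendsto_nhds_unique h1 hTconv
    have h4 := tendsto_nhds_unique h2 hau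
    rw [h3, h4]

/-- If the Rayleigh quotients tend to `‖A‖²`, the vectors are approximate eigenvectors. -/
lemma tendsto_approx (A : H →L[ℂ] K) (hA : A ≠ 0)
    (u : ℕ → H) (hu : ∀ n, ‖u n‖ = 1) (r : ℕ → ℝ)
    (hr : ∀ n, r n ≤ ‖A (u n)‖ ^ 2) (hrlim : Tendsto r atTop (nhds (‖A‖ ^ 2))) :
    Tendsto (fun n => ‖(adjoint A ∘L A) (u n) - (‖A‖ ^ 2 : ℝ) • u n‖) atTop (nhds 0) := by
  set a : ℝ := ‖A‖ ^ 2 with ha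
  have ha0 : 0 < a := pow_pos (norm_pos_iff.mpr hA) 2
  have hsq : Tendsto (fun n => ‖(adjoint A ∘L A) (u n) - a • u n‖ ^ 2) atTop (nhds 0) := by
    apply squeeze_zero (fun n => sq_nonneg _) (g := fun n => 2 * a * a - 2 * a * r n)
    · intro n
      rw [norm_T_sub_sq]
      have h1 : ‖(adjoint A ∘L A) (u n)‖ ^ 2 ≤ a ^ 2 := by
        have := T_apply_norm_le A (u n)
        rw [hu n, mul_one] at this
        exact pow_le_pow_left₀ (norm_nonneg _) this 2
      have h2 : r n ≤ ‖A (u n)‖ ^ 2 := hr n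
      have h3 : 2 * a * r n ≤ 2 * a * ‖A (u n)‖ ^ 2 := by nlinarith
      rw [hu n]
      nlinarith
    · have : Tendsto (fun n => 2 * a * a - 2 * a * r n) atTop
          (nhds (2 * a * a - 2 * a * a)) := (tendsto_const_nhds.sub (hrlim.const_mul _))
      simpa using this
  have : Tendsto (fun n => Real.sqrt (‖(adjoint A ∘L A) (u n) - a • u n‖ ^ 2)) atTop
      (nhds (Real.sqrt 0)) := (Real.continuous_sqrt.tendsto 0).comp hsq
  simpa [Real.sqrt_sq (norm_nonneg _)] using this

/-- The top eigenspace of `A*A`. -/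
noncomputable def eigSp (A : H →L[ℂ] K) : Submodule ℂ H where
  carrier := {ψ | (adjoint A ∘L A) ψ = (‖A‖ ^ 2 : ℝ) • ψ}
  add_mem' := by
    intro x y hx hy
    simp only [Set.mem_setOf_eq] at *
    rw [map_add, hx, hy, smul_add]
  zero_mem' := by simp
  smul_mem' := by
    intro c x hx
    simp only [Set.mem_setOf_eq] at *
    rw [map_smul, hx, smul_comm]

lemma eigSp_closed (A : H →L[ℂ] K) : IsClosed ((eigSp A : Submodule ℂ H) : Set H) := by
  have : ((eigSp A : Submodule ℂ H) : Set H)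
      = (fun ψ => (adjoint A ∘L A) ψ - (‖A‖ ^ 2 : ℝ) • ψ) ⁻¹' {0} := by
    ext ψ
    simp [eigSp, sub_eq_zero, Set.mem_preimage]
  rw [this]
  exact IsClosed.preimage (by fun_prop) isClosed_singleton

/-- Existence of a unit top eigenvector. -/
lemma exists_top_eigenvector (A : H →L[ℂ] K) (hA : A ≠ 0) (hcpt : IsCompactOperator A) :
    ∃ p : H, ‖p‖ = 1 ∧ (adjoint A ∘L A) p = (‖A‖ ^ 2 : ℝ) • p := by
  have hA0 : 0 < ‖A‖ := norm_pos_iff.mpr hA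
  have ha0 : 0 < ‖A‖ ^ 2 := pow_pos hA0 2
  have hseq : ∀ n : ℕ, ∃ v : H, ‖v‖ = 1 ∧ ‖A‖ - ‖A‖ / (n + 2) < ‖A v‖ := by
    intro n
    have hlt : ‖A‖ - ‖A‖ / (n + 2) < ‖A‖ := by
      have : 0 < ‖A‖ / (n + 2) := by positivity
      linarith
    obtain ⟨x, hx1, hx2⟩ := A.exists_lt_apply_of_lt_opNorm hlt
    have hrpos : 0 < ‖A‖ - ‖A‖ / (n + 2) := by
      rw [sub_pos, div_lt_iff₀ (by positivity)]
      nlinarith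
    have hx0 : x ≠ 0 := by
      rintro rfl
      simp at hx2
      linarith
    refine ⟨(‖x‖⁻¹ : ℝ) • x, ?_, ?_⟩
    · rw [norm_smul, Real.norm_eq_abs, abs_inv, abs_norm,
        inv_mul_cancel₀ (norm_ne_zero_iff.mpr hx0)]
    · rw [map_smul_of_tower, norm_smul, Real.norm_eq_abs, abs_inv, abs_norm]
      calc ‖A‖ - ‖A‖ / (n + 2) < ‖A x‖ := hx2
        _ ≤ ‖x‖⁻¹ * ‖A x‖ := by
          nth_rewrite 1 [← one_mul ‖A x‖]
          apply mul_le_mul_of_nonneg_right _ (norm_nonneg _)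
          rw [one_le_inv_iff₀]
          exact ⟨norm_pos_iff.mpr hx0, hx1.le⟩
  choose u hu1 hu2 using hseq
  have hr : ∀ n, (‖A‖ - ‖A‖ / (n + 2)) ^ 2 ≤ ‖A (u n)‖ ^ 2 := by
    intro n
    apply pow_le_pow_left₀ _ (hu2 n).le
    have : 0 < ‖A‖ / ((n : ℝ) + 2) := by positivity
    have h2 : ‖A‖ / ((n : ℝ) + 2) ≤ ‖A‖ / 2 := by
      apply div_le_div_of_nonneg_left (norm_nonneg A) two_pos
      exact_mod_cast by linarith [Nat.cast_nonneg (α := ℝ) n]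
    linarith
  have hrlim : Tendsto (fun n : ℕ => (‖A‖ - ‖A‖ / (n + 2)) ^ 2) atTop (nhds (‖A‖ ^ 2)) := by
    have h1 : Tendsto (fun n : ℕ => ‖A‖ / (n + 2)) atTop (nhds 0) := by
      apply Tendsto.div_atTop tendsto_const_nhds
      exact tendsto_atTop_add_const_right atTop 2 tendsto_natCast_atTop_atTop
    have h2 : Tendsto (fun n : ℕ => ‖A‖ - ‖A‖ / (n + 2)) atTop (nhds ‖A‖) := by
      simpa using tendsto_const_nhds.sub h1
    simpa using h2.pow 2
  have happrox := tendsto_approx A hA u hu1 _ hr hrlim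
  obtain ⟨p, _, hp1, hp2⟩ := exists_eigen_of_approx A hcpt
    (pow_pos (norm_pos_iff.mpr hA) 2) u hu1 happrox
  exact ⟨p, hp1, hp2⟩

/-- The spectral gap: below the top eigenvalue, the Rayleigh quotient on the orthogonal
complement of the top eigenspace is bounded away from `‖A‖²`. -/
lemma exists_gap (A : H →L[ℂ] K) (hA : A ≠ 0) (hcpt : IsCompactOperator A) :
    ∃ γ > 0, ∀ p ∈ (eigSp A)ᗮ, ‖A p‖ ^ 2 ≤ (‖A‖ ^ 2 - γ) * ‖p‖ ^ 2 := by
  by_contra hcon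
  push_neg at hcon
  have hstep : ∀ n : ℕ, ∃ q : H, q ∈ (eigSp A)ᗮ ∧ ‖q‖ = 1 ∧
      ‖A‖ ^ 2 - 1 / (n + 1) ≤ ‖A q‖ ^ 2 := by
    intro n
    obtain ⟨p, hpmem, hplt⟩ := hcon (1 / (n + 1)) (by positivity)
    have hp0 : p ≠ 0 := by
      rintro rfl
      simp at hplt
    have hnp : (0:ℝ) < ‖p‖ := norm_pos_iff.mpr hp0
    refine ⟨(‖p‖⁻¹ : ℝ) • p, ?_, ?_, ?_⟩
    · rw [← real_smul_eq]
      exact Submodule.smul_mem _ _ hpmem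
    · rw [norm_smul, Real.norm_eq_abs, abs_inv, abs_norm, inv_mul_cancel₀ hnp.ne']
    · rw [map_smul_of_tower, norm_smul, Real.norm_eq_abs, abs_inv, abs_norm, mul_pow]
      have h2 : (‖p‖⁻¹) ^ 2 * ((‖A‖ ^ 2 - 1 / (n + 1)) * ‖p‖ ^ 2)
          ≤ (‖p‖⁻¹) ^ 2 * ‖A p‖ ^ 2 := by
        apply mul_le_mul_of_nonneg_left hplt.le (by positivity)
      calc ‖A‖ ^ 2 - 1 / (n + 1)
          = (‖p‖⁻¹) ^ 2 * ((‖A‖ ^ 2 - 1 / (n + 1)) * ‖p‖ ^ 2) := by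
            field_simp
        _ ≤ (‖p‖⁻¹) ^ 2 * ‖A p‖ ^ 2 := h2
  choose q hq1 hq2 hq3 using hstep
  have hrlim : Tendsto (fun n : ℕ => ‖A‖ ^ 2 - 1 / (n + 1)) atTop (nhds (‖A‖ ^ 2)) := by
    have h1 : Tendsto (fun n : ℕ => 1 / ((n : ℝ) + 1)) atTop (nhds 0) := by
      apply Tendsto.div_atTop tendsto_const_nhds
      exact tendsto_atTop_add_const_right atTop 1 tendsto_natCast_atTop_atTop
    simpa using tendsto_const_nhds.sub h1
  have happrox := tendsto_approx A hA q hq2 _ (fun n => hq3 n) hrlim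
  obtain ⟨p, hpcl, hp1, hp2⟩ := exists_eigen_of_approx A hcpt
    (pow_pos (norm_pos_iff.mpr hA) 2) q hq2 happrox
  have hporth : p ∈ (eigSp A)ᗮ := by
    have hsub : closure (Set.range q) ⊆ ((eigSp A)ᗮ : Set H) := by
      apply closure_minimal _ (Submodule.isClosed_orthogonal _)
      rintro _ ⟨n, rfl⟩
      exact hq1 n
    exact hsub hpcl
  have hpeig : p ∈ eigSp A := hp2
  have : (⟪p, p⟫ : ℂ) = 0 := (Submodule.mem_orthogonal _ _).mp hporth p hpeig
  rw [inner_self_eq_zero] at this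
  rw [this] at hp1
  simp at hp1

lemma T_isPositive (A : H →L[ℂ] K) : IsPositive (adjoint A ∘L A) := by
  refine ⟨(T_selfAdjoint A).isSymmetric, fun φ => ?_⟩
  have h : ((adjoint A ∘L A).reApplyInnerSelf φ) = RCLike.re ⟪(adjoint A ∘L A) φ, φ⟫ := rfl
  rw [h, ← inner_conj_symm, RCLike.conj_re, RCLike.re_to_complex, T_re]
  positivity

lemma nontrivial_of_ne_zero (A : H →L[ℂ] K) (hA : A ≠ 0) : Nontrivial H := by
  by_contra hn
  rw [not_nontrivial_iff_subsingleton] at hn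
  apply hA
  ext x
  rw [Subsingleton.elim x 0]
  simp

lemma spec_subset (A : H →L[ℂ] K) (hA : A ≠ 0) :
    spectrum ℝ (adjoint A ∘L A) ⊆ Icc 0 (‖A‖ ^ 2) := by
  haveI := nontrivial_of_ne_zero A hA
  intro x hx
  constructor
  · exact spectrum_nonneg_of_nonneg ((nonneg_iff_isPositive _).mpr (T_isPositive A)) hx
  · calc x ≤ ‖x‖ := Real.le_norm_self x
      _ ≤ ‖adjoint A ∘L A‖ := spectrum.norm_le_norm_of_mem hx
      _ = ‖A‖ ^ 2 := by rw [norm_adjoint_comp_self, sq]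

lemma le_inner_of_le (S S' : H →L[ℂ] H) (h : S ≤ S') (φ : H) :
    (⟪φ, S φ⟫).re ≤ (⟪φ, S' φ⟫).re := by
  rw [ContinuousLinearMap.le_def] at h
  have := h.inner_nonneg_right φ
  rw [sub_apply, inner_sub_right] at this
  have h2 : RCLike.re (⟪φ, S' φ⟫ - ⟪φ, S φ⟫) = (⟪φ, S' φ⟫).re - (⟪φ, S φ⟫).re := by
    simp [map_sub]
  have h3 := (Complex.le_def.mp this).1
  rw [Complex.zero_re, Complex.sub_re] at h3
  linarith

lemma sq_inner_eq (S : H →L[ℂ] H) (hS : IsSelfAdjoint S) (φ : H) :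
    (⟪φ, (S ^ 2) φ⟫).re = ‖S φ‖ ^ 2 := by
  have h1 : (S ^ 2) φ = S (S φ) := by
    rw [pow_two, ContinuousLinearMap.mul_apply]
  rw [h1]
  nth_rewrite 1 [← (isSelfAdjoint_iff'.mp hS)]
  rw [adjoint_inner_right, ← RCLike.re_to_complex, inner_self_eq_norm_sq]

lemma algebraMap_apply' (r : ℝ) (φ : H) : (algebraMap ℝ (H →L[ℂ] H) r) φ = r • φ := by
  rw [Algebra.algebraMap_eq_smul_one]
  simp

/-- Membership in a small spectral subspace gives an approximate eigenvector. -/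
lemma approx_of_mem (A : H →L[ℂ] K) (hA : A ≠ 0) {δ : ℝ} (hδ : 0 < δ) {φ : H}
    (hφ : φ ∈ spectralSubspace (adjoint A ∘L A) (Icc (‖A‖ ^ 2 - δ) (‖A‖ ^ 2))) :
    ‖(adjoint A ∘L A) φ - (‖A‖ ^ 2 : ℝ) • φ‖ ≤ δ * ‖φ‖ := by
  set a : ℝ := ‖A‖ ^ 2 with ha
  set T : H →L[ℂ] H := adjoint A ∘L A with hT
  have hsa : IsSelfAdjoint T := T_selfAdjoint A
  set g : ℝ → ℝ := fun x => max ((x - a) ^ 2 - δ ^ 2) 0 with hg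
  have hgc : Continuous g := by fun_prop
  have hg0 : ∀ x ∈ Icc (a - δ) a, g x = 0 := by
    intro x hx
    apply max_eq_right
    have : (x - a) ^ 2 ≤ δ ^ 2 := by
      apply sq_le_sq'
      · linarith [hx.1]
      · linarith [hx.2]
    linarith
  have h1 : cfc g T φ = 0 := hφ g hgc hg0
  have h2 : cfc (fun x => (x - a) ^ 2 - δ ^ 2) T ≤ cfc g T :=
    cfc_mono (fun x _ => le_max_left _ _)
  have h3 : cfc (fun x => (x - a) ^ 2 - δ ^ 2) T
      = (T - algebraMap ℝ (H →L[ℂ] H) a) ^ 2 - algebraMap ℝ (H →L[ℂ] H) (δ ^ 2) := by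
    rw [cfc_sub (fun x => (x - a) ^ 2) (fun _ => δ ^ 2) T, cfc_const (δ ^ 2) T,
      cfc_pow (fun x => x - a) 2 T, cfc_sub (fun x : ℝ => x) (fun _ => a) T,
      cfc_id' ℝ T, cfc_const a T]
  rw [h3] at h2
  have h4 := le_inner_of_le _ _ h2 φ
  rw [h1] at h4
  have h5 : (⟪φ, (0 : H)⟫).re = 0 := by simp
  rw [sub_apply, inner_sub_right] at h4
  have hB : IsSelfAdjoint (T - algebraMap ℝ (H →L[ℂ] H) a) :=
    hsa.sub (cfc_predicate_algebraMap (R := ℝ) (A := H →L[ℂ] H) a)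
  have h6 : (⟪φ, ((T - algebraMap ℝ (H →L[ℂ] H) a) ^ 2) φ⟫).re
      = ‖(T - algebraMap ℝ (H →L[ℂ] H) a) φ‖ ^ 2 := sq_inner_eq _ hB φ
  have h7 : (⟪φ, (algebraMap ℝ (H →L[ℂ] H) (δ ^ 2)) φ⟫).re = δ ^ 2 * ‖φ‖ ^ 2 := by
    rw [algebraMap_apply', re_smul_inner]
  have h8 : (⟪φ, ((T - algebraMap ℝ (H →L[ℂ] H) a) ^ 2) φ⟫
      - ⟪φ, (algebraMap ℝ (H →L[ℂ] H) (δ ^ 2)) φ⟫).re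
      = ‖(T - algebraMap ℝ (H →L[ℂ] H) a) φ‖ ^ 2 - δ ^ 2 * ‖φ‖ ^ 2 := by
    rw [Complex.sub_re, h6, h7]
  rw [h8, h5] at h4
  have h9 : (T - algebraMap ℝ (H →L[ℂ] H) a) φ = T φ - a • φ := by
    rw [sub_apply, algebraMap_apply']
  rw [h9] at h4
  have h10 : ‖T φ - a • φ‖ ^ 2 ≤ (δ * ‖φ‖) ^ 2 := by
    rw [mul_pow]; linarith
  have := Real.sqrt_le_sqrt h10
  rwa [Real.sqrt_sq (norm_nonneg _), Real.sqrt_sq (by positivity)] at this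

/-- A top eigenvector lies in every spectral subspace `[‖A‖² - δ, ‖A‖²]`. -/
lemma eigen_mem (A : H →L[ℂ] K) (hA : A ≠ 0) {δ : ℝ} (hδ : 0 < δ) {φ : H}
    (hφ : (adjoint A ∘L A) φ = (‖A‖ ^ 2 : ℝ) • φ) :
    φ ∈ spectralSubspace (adjoint A ∘L A) (Icc (‖A‖ ^ 2 - δ) (‖A‖ ^ 2)) := by
  set a : ℝ := ‖A‖ ^ 2 with ha
  have ha0 : 0 < a := pow_pos (norm_pos_iff.mpr hA) 2
  set T : H →L[ℂ] H := adjoint A ∘L A with hT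
  have hsa : IsSelfAdjoint T := T_selfAdjoint A
  intro f hfc hf0
  -- bound f² on the spectrum by (C/δ) * (a - x)
  obtain ⟨x₀, hx₀, hmax'⟩ := isCompact_Icc.exists_isMaxOn (Set.nonempty_Icc.mpr ha0.le)
    (hfc.pow 2).continuousOn (f := fun x => f x ^ 2)
  have hmax : ∀ x ∈ Icc 0 a, f x ^ 2 ≤ f x₀ ^ 2 := fun x hx => hmax' hx
  set C : ℝ := f x₀ ^ 2 with hC
  have hC0 : 0 ≤ C := sq_nonneg _
  have hdom : ∀ x ∈ spectrum ℝ T, f x ^ 2 ≤ C / δ * (a - x) := by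
    intro x hx
    have hxI : x ∈ Icc 0 a := spec_subset A hA hx
    by_cases hcase : a - δ ≤ x
    · rw [hf0 x ⟨hcase, hxI.2⟩]
      have h00 : 0 ≤ a - x := by linarith [hxI.2]
      have h01 : 0 ≤ C / δ := by positivity
      nlinarith
    · push_neg at hcase
      have h1 : f x ^ 2 ≤ C := hmax x hxI
      have h2 : δ ≤ a - x := by linarith
      calc f x ^ 2 ≤ C := h1
        _ = C / δ * δ := by field_simp
        _ ≤ C / δ * (a - x) := by
            apply mul_le_mul_of_nonneg_left h2 (by positivity)
  have h2 : cfc (fun x => f x ^ 2) T ≤ cfc (fun x => C / δ * (a - x)) T := by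
    apply cfc_mono hdom (by fun_prop) (by fun_prop)
  have h3 : cfc (fun x => C / δ * (a - x)) T
      = (C / δ) • (algebraMap ℝ (H →L[ℂ] H) a - T) := by
    rw [cfc_const_mul (C / δ) (fun x => a - x) T,
      cfc_sub (fun _ : ℝ => a) (fun x : ℝ => x) T, cfc_id' ℝ T, cfc_const a T]
  have h4 : cfc (fun x => f x ^ 2) T = (cfc f T) ^ 2 := cfc_pow f 2 T
  rw [h3, h4] at h2
  have h5 := le_inner_of_le _ _ h2 φ
  have hSsa : IsSelfAdjoint (cfc f T) := cfc_predicate f T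
  have h6 : (⟪φ, ((cfc f T) ^ 2) φ⟫).re = ‖cfc f T φ‖ ^ 2 := sq_inner_eq _ hSsa φ
  have h7 : (⟪φ, ((C / δ) • (algebraMap ℝ (H →L[ℂ] H) a - T)) φ⟫).re = 0 := by
    have happ : ((C / δ) • (algebraMap ℝ (H →L[ℂ] H) a - T)) φ
        = (C / δ) • (a • φ - T φ) := by
      rw [ContinuousLinearMap.smul_apply, sub_apply, algebraMap_apply']
    rw [happ, hφ]
    simp
  rw [h6, h7] at h5
  have : ‖cfc f T φ‖ = 0 := by
    nlinarith [sq_nonneg ‖cfc f T φ‖, norm_nonneg (cfc f T φ)]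
  exact norm_eq_zero.mp this

lemma F_cont (A X : H →L[ℂ] K) : Continuous fun φ : H => (⟪A φ, X φ⟫).re :=
  Complex.continuous_re.comp (Continuous.inner A.continuous X.continuous)

lemma F_le (A X : H →L[ℂ] K) (φ : H) (hφ : ‖φ‖ ≤ 1) : (⟪A φ, X φ⟫).re ≤ ‖A‖ * ‖X‖ := by
  have h1 : (⟪A φ, X φ⟫).re ≤ ‖(⟪A φ, X φ⟫ : ℂ)‖ := by
    rw [← RCLike.re_to_complex]; exact RCLike.re_le_norm _
  have h2 : ‖(⟪A φ, X φ⟫ : ℂ)‖ ≤ ‖A φ‖ * ‖X φ‖ := norm_inner_le_norm _ _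
  have h3 : ‖A φ‖ ≤ ‖A‖ := by
    calc ‖A φ‖ ≤ ‖A‖ * ‖φ‖ := le_opNorm _ _
      _ ≤ ‖A‖ * 1 := by apply mul_le_mul_of_nonneg_left hφ (norm_nonneg _)
      _ = ‖A‖ := mul_one _
  have h4 : ‖X φ‖ ≤ ‖X‖ := by
    calc ‖X φ‖ ≤ ‖X‖ * ‖φ‖ := le_opNorm _ _
      _ ≤ ‖X‖ * 1 := by apply mul_le_mul_of_nonneg_left hφ (norm_nonneg _)
      _ = ‖X‖ := mul_one _
  calc (⟪A φ, X φ⟫).re ≤ ‖A φ‖ * ‖X φ‖ := h1.trans h2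
    _ ≤ ‖A‖ * ‖X‖ := by
        apply mul_le_mul h3 h4 (norm_nonneg _) (norm_nonneg _)

lemma F_lip (A X : H →L[ℂ] K) (φ ψ : H) (hφ : ‖φ‖ ≤ 1) (hψ : ‖ψ‖ ≤ 1) :
    (⟪A φ, X φ⟫).re ≤ (⟪A ψ, X ψ⟫).re + 2 * ‖A‖ * ‖X‖ * ‖φ - ψ‖ := by
  have key : (⟪A φ, X φ⟫ : ℂ) - ⟪A ψ, X ψ⟫ = ⟪A (φ - ψ), X φ⟫ + ⟪A ψ, X (φ - ψ)⟫ := by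
    rw [map_sub, map_sub, inner_sub_left, inner_sub_right]
    ring
  have h0 : ((⟪A φ, X φ⟫ : ℂ) - ⟪A ψ, X ψ⟫).re
      = (⟪A (φ - ψ), X φ⟫).re + (⟪A ψ, X (φ - ψ)⟫).re := by
    rw [key, Complex.add_re]
  have hre : ∀ z : ℂ, z.re ≤ ‖z‖ := fun z => by
    rw [← RCLike.re_to_complex]; exact RCLike.re_le_norm z
  have h1 : (⟪A (φ - ψ), X φ⟫).re ≤ (‖A‖ * ‖φ - ψ‖) * ‖X‖ := by
    calc (⟪A (φ - ψ), X φ⟫).re ≤ ‖(⟪A (φ - ψ), X φ⟫ : ℂ)‖ := hre _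
      _ ≤ ‖A (φ - ψ)‖ * ‖X φ‖ := norm_inner_le_norm _ _
      _ ≤ (‖A‖ * ‖φ - ψ‖) * ‖X φ‖ := by
          apply mul_le_mul_of_nonneg_right (le_opNorm _ _) (norm_nonneg _)
      _ ≤ (‖A‖ * ‖φ - ψ‖) * ‖X‖ := by
          apply mul_le_mul_of_nonneg_left _ (by positivity)
          calc ‖X φ‖ ≤ ‖X‖ * ‖φ‖ := le_opNorm _ _
            _ ≤ ‖X‖ * 1 := mul_le_mul_of_nonneg_left hφ (norm_nonneg _)
            _ = ‖X‖ := mul_one _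
  have h2 : (⟪A ψ, X (φ - ψ)⟫).re ≤ ‖A‖ * (‖X‖ * ‖φ - ψ‖) := by
    calc (⟪A ψ, X (φ - ψ)⟫).re ≤ ‖(⟪A ψ, X (φ - ψ)⟫ : ℂ)‖ := hre _
      _ ≤ ‖A ψ‖ * ‖X (φ - ψ)‖ := norm_inner_le_norm _ _
      _ ≤ ‖A ψ‖ * (‖X‖ * ‖φ - ψ‖) := by
          apply mul_le_mul_of_nonneg_left (le_opNorm _ _) (norm_nonneg _)
      _ ≤ ‖A‖ * (‖X‖ * ‖φ - ψ‖) := by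
          apply mul_le_mul_of_nonneg_right _ (by positivity)
          calc ‖A ψ‖ ≤ ‖A‖ * ‖ψ‖ := le_opNorm _ _
            _ ≤ ‖A‖ * 1 := mul_le_mul_of_nonneg_left hψ (norm_nonneg _)
            _ = ‖A‖ := mul_one _
  have h3 : ((⟪A φ, X φ⟫ : ℂ) - ⟪A ψ, X ψ⟫).re
      = (⟪A φ, X φ⟫).re - (⟪A ψ, X ψ⟫).re := Complex.sub_re _ _
  nlinarith [h0, h1, h2, h3]

/-- Existence of a maximizer of `Re⟪Aψ, Xψ⟫` over unit top eigenvectors. -/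
lemma exists_maximizer (A X : H →L[ℂ] K) (hA : A ≠ 0) (hcpt : IsCompactOperator A) :
    ∃ φ₀ : H, ‖φ₀‖ = 1 ∧ (adjoint A ∘L A) φ₀ = (‖A‖ ^ 2 : ℝ) • φ₀ ∧
      ∀ ψ : H, ‖ψ‖ = 1 → (adjoint A ∘L A) ψ = (‖A‖ ^ 2 : ℝ) • ψ →
        (⟪A ψ, X ψ⟫).re ≤ (⟪A φ₀, X φ₀⟫).re := by
  set a : ℝ := ‖A‖ ^ 2 with ha
  have ha0 : 0 < a := pow_pos (norm_pos_iff.mpr hA) 2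
  set S : Set H := {ψ : H | ‖ψ‖ = 1 ∧ (adjoint A ∘L A) ψ = a • ψ} with hS
  obtain ⟨p, hp1, hp2⟩ := exists_top_eigenvector A hA hcpt
  have hSne : S.Nonempty := ⟨p, hp1, hp2⟩
  obtain ⟨C, hC, hsub⟩ := hcpt.image_closedBall_subset_compact (f := A.toLinearMap) 1
  have hD : IsCompact ((fun y : K => a⁻¹ • (adjoint A) y) '' C) :=
    hC.image (by fun_prop)
  have hSsub : S ⊆ (fun y : K => a⁻¹ • (adjoint A) y) '' C := by
    rintro ψ ⟨hψ1, hψ2⟩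
    refine ⟨A ψ, hsub ⟨ψ, by simp [Metric.mem_closedBall, dist_eq_norm, hψ1], rfl⟩, ?_⟩
    show a⁻¹ • (adjoint A) (A ψ) = ψ
    have : (adjoint A) (A ψ) = (adjoint A ∘L A) ψ := rfl
    rw [this, hψ2, smul_smul, inv_mul_cancel₀ ha0.ne', one_smul]
  have hSclosed : IsClosed S := by
    have : S = (fun ψ : H => ‖ψ‖) ⁻¹' {1}
        ∩ (fun ψ : H => (adjoint A ∘L A) ψ - a • ψ) ⁻¹' {0} := by
      ext ψ
      simp [hS, sub_eq_zero, Set.mem_preimage]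
    rw [this]
    exact IsClosed.inter (IsClosed.preimage continuous_norm isClosed_singleton)
      (IsClosed.preimage (by fun_prop) isClosed_singleton)
  have hScompact : IsCompact S := hD.of_isClosed_subset hSclosed hSsub
  obtain ⟨φ₀, hφ₀S, hmax⟩ := hScompact.exists_isMaxOn hSne (F_cont A X).continuousOn
  exact ⟨φ₀, hφ₀S.1, hφ₀S.2, fun ψ h1 h2 => hmax ⟨h1, h2⟩⟩

lemma mem_eigSp (A : H →L[ℂ] K) {ψ : H} :
    ψ ∈ eigSp A ↔ (adjoint A ∘L A) ψ = (‖A‖ ^ 2 : ℝ) • ψ := Iff.rfl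

/-- The core estimate: for small `δ`, every value in the `δ`-sup set is at most `M + L·δ/γ`. -/
lemma core_estimate (A X : H →L[ℂ] K) (hA : A ≠ 0)
    {γ : ℝ} (hγ0 : 0 < γ)
    (hgap : ∀ p ∈ (eigSp A)ᗮ, ‖A p‖ ^ 2 ≤ (‖A‖ ^ 2 - γ) * ‖p‖ ^ 2)
    {φ₀ : H} (hφ₀n : ‖φ₀‖ = 1) (hφ₀e : (adjoint A ∘L A) φ₀ = (‖A‖ ^ 2 : ℝ) • φ₀)
    (hφ₀max : ∀ ψ : H, ‖ψ‖ = 1 → (adjoint A ∘L A) ψ = (‖A‖ ^ 2 : ℝ) • ψ →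
        (⟪A ψ, X ψ⟫).re ≤ (⟪A φ₀, X φ₀⟫).re)
    {δ : ℝ} (hδ0 : 0 < δ) (hδγ : δ ≤ γ / 2) {φ : H} (hφn : ‖φ‖ = 1)
    (hφ : φ ∈ spectralSubspace (adjoint A ∘L A) (Icc (‖A‖ ^ 2 - δ) (‖A‖ ^ 2))) :
    (⟪A φ, X φ⟫).re ≤ (⟪A φ₀, X φ₀⟫).re + 4 * ‖A‖ * ‖X‖ * (δ / γ) := by
  haveI : CompleteSpace (eigSp A) := (eigSp_closed A).completeSpace_coe
  set a : ℝ := ‖A‖ ^ 2 with ha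
  set T : H →L[ℂ] H := adjoint A ∘L A with hT
  set e : H := (Submodule.orthogonalProjection (eigSp A) φ : H) with he
  set p : H := φ - e with hp
  have hpE : p ∈ (eigSp A)ᗮ := Submodule.sub_starProjection_mem_orthogonal φ
  have heE : e ∈ eigSp A := (Submodule.orthogonalProjection (eigSp A) φ).2
  have hTe : T e = a • e := heE
  have horth : (⟪e, p⟫ : ℂ) = 0 := (Submodule.mem_orthogonal _ _).mp hpE e heE
  have hnorm : ‖e‖ ^ 2 + ‖p‖ ^ 2 = 1 := by
    have h1 : φ = e + p := by rw [hp]; abel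
    have h2 : ‖e + p‖ ^ 2 = ‖e‖ ^ 2 + 2 * RCLike.re (⟪e, p⟫ : ℂ) + ‖p‖ ^ 2 :=
      norm_add_sq (𝕜 := ℂ) e p
    rw [horth] at h2
    simp only [map_zero] at h2
    rw [← h1, hφn] at h2
    nlinarith
  have happrox : ‖T φ - a • φ‖ ≤ δ := by
    have := approx_of_mem A hA hδ0 hφ
    rwa [hφn, mul_one] at this
  have hTp : T p - a • p = T φ - a • φ := by
    rw [hp, map_sub, hTe, smul_sub]
    abel
  have hpnle : ‖p‖ ≤ δ / γ := by
    have hApb : ‖A p‖ ^ 2 ≤ (a - γ) * ‖p‖ ^ 2 := hgap p hpE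
    have hRay : (⟪p, T p⟫).re = ‖A p‖ ^ 2 := T_re A p
    have h1 : γ * ‖p‖ ^ 2 ≤ (⟪p, a • p - T p⟫).re := by
      rw [inner_sub_right, Complex.sub_re, re_smul_inner, hRay]
      nlinarith
    have h2 : (⟪p, a • p - T p⟫).re ≤ δ * ‖p‖ := by
      calc (⟪p, a • p - T p⟫).re ≤ ‖(⟪p, a • p - T p⟫ : ℂ)‖ := by
            rw [← RCLike.re_to_complex]; exact RCLike.re_le_norm _
        _ ≤ ‖p‖ * ‖a • p - T p‖ := norm_inner_le_norm _ _
        _ = ‖p‖ * ‖T φ - a • φ‖ := by rw [← norm_sub_rev (T p), hTp]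
        _ ≤ ‖p‖ * δ := mul_le_mul_of_nonneg_left happrox (norm_nonneg _)
        _ = δ * ‖p‖ := mul_comm _ _
    rcases eq_or_lt_of_le (norm_nonneg p) with h0 | h0
    · rw [← h0]; positivity
    · rw [le_div_iff₀ hγ0]
      nlinarith
  have hpl : ‖p‖ ≤ 1 / 2 := by
    have : δ / γ ≤ 1 / 2 := by
      rw [div_le_div_iff₀ hγ0 two_pos]
      linarith
    linarith
  have hel : 1 - ‖p‖ ≤ ‖e‖ := by
    have h1 : φ - p = e := by rw [hp]; abel
    have := norm_sub_norm_le φ p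
    rw [h1, hφn] at this
    linarith
  have hepos : (0:ℝ) < ‖e‖ := by linarith
  have heub : ‖e‖ ≤ 1 := by nlinarith [sq_nonneg ‖p‖, norm_nonneg e]
  set ψ : H := (‖e‖⁻¹ : ℝ) • e with hψ
  have hψE : ψ ∈ eigSp A := by
    rw [hψ, ← real_smul_eq]
    exact Submodule.smul_mem _ _ heE
  have hψn : ‖ψ‖ = 1 := by
    rw [hψ, norm_smul, Real.norm_eq_abs, abs_inv, abs_norm, inv_mul_cancel₀ hepos.ne']
  have hFψ : (⟪A ψ, X ψ⟫).re ≤ (⟪A φ₀, X φ₀⟫).re := hφ₀max ψ hψn hψE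
  have hdist : ‖φ - ψ‖ ≤ 2 * ‖p‖ := by
    have h1 : φ - ψ = p + (e - ψ) := by rw [hp]; abel
    have h2 : e - ψ = (1 - ‖e‖⁻¹) • e := by rw [sub_smul, one_smul, hψ]
    have h3 : ‖e - ψ‖ = 1 - ‖e‖ := by
      rw [h2, norm_smul, Real.norm_eq_abs]
      have hinv : (1:ℝ) ≤ ‖e‖⁻¹ := by
        rw [one_le_inv_iff₀]; exact ⟨hepos, heub⟩
      rw [abs_of_nonpos (by linarith)]
      field_simp
      ring
    calc ‖φ - ψ‖ ≤ ‖p‖ + ‖e - ψ‖ := h1 ▸ norm_add_le _ _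
      _ = ‖p‖ + (1 - ‖e‖) := by rw [h3]
      _ ≤ ‖p‖ + ‖p‖ := by linarith
      _ = 2 * ‖p‖ := by ring
  have hlip := F_lip A X φ ψ (le_of_eq hφn) (le_of_eq hψn)
  have hAX : (0:ℝ) ≤ ‖A‖ * ‖X‖ := by positivity
  have h4 : 2 * ‖A‖ * ‖X‖ * ‖φ - ψ‖ ≤ 2 * ‖A‖ * ‖X‖ * (2 * (δ / γ)) := by
    apply mul_le_mul_of_nonneg_left _ (by positivity)
    calc ‖φ - ψ‖ ≤ 2 * ‖p‖ := hdist
      _ ≤ 2 * (δ / γ) := by linarith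
  calc (⟪A φ, X φ⟫).re ≤ (⟪A ψ, X ψ⟫).re + 2 * ‖A‖ * ‖X‖ * ‖φ - ψ‖ := hlip
    _ ≤ (⟪A φ₀, X φ₀⟫).re + 2 * ‖A‖ * ‖X‖ * (2 * (δ / γ)) := by linarith
    _ = (⟪A φ₀, X φ₀⟫).re + 4 * ‖A‖ * ‖X‖ * (δ / γ) := by ring

end InfSupAux

open InfSupAux in
theorem inf_sup_eq_max_for_compact
    {H K : Type*} [NormedAddCommGroup H] [InnerProductSpace ℂ H] [CompleteSpace H]
    [NormedAddCommGroup K] [InnerProductSpace ℂ K] [CompleteSpace K]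
    (A X : H →L[ℂ] K) (hA : A ≠ 0) (hcpt : IsCompactOperator A) :
    (∀ δ₁ δ₂ : ℝ, 0 < δ₁ → δ₁ ≤ δ₂ →
      spectralSubspace ((adjoint A) ∘L A) (Set.Icc (‖A‖ ^ 2 - δ₁) (‖A‖ ^ 2)) ⊆
        spectralSubspace ((adjoint A) ∘L A) (Set.Icc (‖A‖ ^ 2 - δ₂) (‖A‖ ^ 2))) ∧
    (∀ δ : ℝ, 0 < δ → ∃ φ : H,
      φ ∈ spectralSubspace ((adjoint A) ∘L A) (Set.Icc (‖A‖ ^ 2 - δ) (‖A‖ ^ 2)) ∧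
      ‖φ‖ = 1) ∧
    ∃ φ₀ : H, ‖φ₀‖ = 1 ∧ ((adjoint A) ∘L A) φ₀ = (‖A‖ ^ 2 : ℝ) • φ₀ ∧
      (∀ ψ : H, ‖ψ‖ = 1 → ((adjoint A) ∘L A) ψ = (‖A‖ ^ 2 : ℝ) • ψ →
        (inner ℂ (A ψ) (X ψ) : ℂ).re ≤ (inner ℂ (A φ₀) (X φ₀) : ℂ).re) ∧
      sInf {s : ℝ | ∃ δ : ℝ, 0 < δ ∧
        s = sSup {r : ℝ | ∃ φ : H,
          φ ∈ spectralSubspace ((adjoint A) ∘L A) (Set.Icc (‖A‖ ^ 2 - δ) (‖A‖ ^ 2)) ∧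
          ‖φ‖ = 1 ∧ r = (inner ℂ (A φ) (X φ) : ℂ).re}} =
        (inner ℂ (A φ₀) (X φ₀) : ℂ).re := by
  classical
  obtain ⟨φ₀, hφ₀n, hφ₀e, hφ₀max⟩ := exists_maximizer A X hA hcpt
  obtain ⟨γ, hγ0, hgap⟩ := exists_gap A hA hcpt
  set M : ℝ := (inner ℂ (A φ₀) (X φ₀) : ℂ).re with hM
  set R : ℝ → Set ℝ := fun δ => {r : ℝ | ∃ φ : H,
      φ ∈ spectralSubspace ((adjoint A) ∘L A) (Set.Icc (‖A‖ ^ 2 - δ) (‖A‖ ^ 2)) ∧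
      ‖φ‖ = 1 ∧ r = (inner ℂ (A φ) (X φ) : ℂ).re} with hR
  have hbddR : ∀ δ : ℝ, ∀ r ∈ R δ, r ≤ ‖A‖ * ‖X‖ := by
    rintro δ r ⟨φ, _, hn, rfl⟩
    exact F_le A X φ hn.le
  have hMmem : ∀ δ : ℝ, 0 < δ → M ∈ R δ :=
    fun δ hδ => ⟨φ₀, eigen_mem A hA hδ hφ₀e, hφ₀n, rfl⟩
  have hRsup_ge : ∀ δ : ℝ, 0 < δ → M ≤ sSup (R δ) :=
    fun δ hδ => le_csSup ⟨‖A‖ * ‖X‖, fun r hr => hbddR δ r hr⟩ (hMmem δ hδ)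
  refine ⟨?_, ?_, φ₀, hφ₀n, hφ₀e, hφ₀max, ?_⟩
  · intro δ₁ δ₂ h1 h12 φ hφ f hf hf0
    exact hφ f hf fun x hx => hf0 x (Icc_subset_Icc (by linarith) le_rfl hx)
  · exact fun δ hδ => ⟨φ₀, eigen_mem A hA hδ hφ₀e, hφ₀n⟩
  · set Sset : Set ℝ := {s : ℝ | ∃ δ : ℝ, 0 < δ ∧ s = sSup (R δ)} with hSset
    have hSne : Sset.Nonempty := ⟨sSup (R 1), 1, one_pos, rfl⟩
    have hbelow : ∀ s ∈ Sset, M ≤ s := by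
      rintro s ⟨δ, hδ, rfl⟩
      exact hRsup_ge δ hδ
    have hge : M ≤ sInf Sset := le_csInf hSne hbelow
    have hle : sInf Sset ≤ M := by
      apply le_of_forall_pos_le_add
      intro ε hε
      set L : ℝ := 4 * ‖A‖ * ‖X‖ with hL
      have hL0 : 0 ≤ L := by positivity
      set δ : ℝ := min (γ / 2) (ε * γ / (L + 1)) with hδdef
      have hδ0 : 0 < δ := lt_min (by positivity) (by positivity)
      have hδγ : δ ≤ γ / 2 := min_le_left _ _
      have hsup_le : sSup (R δ) ≤ M + ε := by
        apply csSup_le ⟨M, hMmem δ hδ0⟩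
        rintro r ⟨φ, hφmem, hφn, rfl⟩
        have := core_estimate A X hA hγ0 hgap hφ₀n hφ₀e hφ₀max hδ0 hδγ hφn hφmem
        have hδ2 : δ ≤ ε * γ / (L + 1) := min_le_right _ _
        have hkey : L * (δ / γ) ≤ ε := by
          have h2 : δ * (L + 1) ≤ ε * γ := by
            have := (le_div_iff₀ (by positivity : (0:ℝ) < L + 1)).mp hδ2
            linarith
          have h4 : L * (δ / γ) * γ ≤ ε * γ := by
            rw [mul_assoc, div_mul_cancel₀ _ hγ0.ne']
            nlinarith
          exact le_of_mul_le_mul_right h4 hγ0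
        calc (inner ℂ (A φ) (X φ) : ℂ).re ≤ M + 4 * ‖A‖ * ‖X‖ * (δ / γ) := this
          _ ≤ M + ε := by rw [← hL] at *; linarith
      calc sInf Sset ≤ sSup (R δ) := csInf_le ⟨M, hbelow⟩ ⟨δ, hδ0, rfl⟩
        _ ≤ M + ε := hsup_le
    exact le_antisymm hle hge
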